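/- Mignotte's bound on factor coefficients: if f ∈ ℤ[x] has degree n and g ∈ ℤ[x] divides f, then every coefficient of g has absolute value at most 2^n times the Euclidean norm (ℓ₂ norm of the coefficient vector) of f. -/

import Mathlib

open Polynomial Multiset Complex
noncomputable def Complex.abs : AbsoluteValue ℂ ℝ :=
  IsAbsoluteValue.toAbsoluteValue (norm : ℂ → ℝ)

lemma Complex.abs_apply (z : ℂ) : Complex.abs z = Real.sqrt (Complex.normSq z) := by
  show ‖z‖ = _
  rw [Complex.norm_def]

lemma Complex.abs_conj (z : ℂ) : Complex.abs ((starRingEnd ℂ) z) = Complex.abs z := by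
  show ‖(starRingEnd ℂ) z‖ = ‖z‖
  exact Complex.norm_conj z

lemma Complex.abs_intCast (n : ℤ) : Complex.abs (n : ℂ) = |(n : ℝ)| := by
  show ‖(n : ℂ)‖ = _
  exact Complex.norm_intCast n
noncomputable def SSq (p : ℂ[X]) : ℝ :=
  ∑ j ∈ Finset.range (p.natDegree + 1), Complex.normSq (p.coeff j)

lemma SSq_eq (p : ℂ[X]) {N : ℕ} (h : p.natDegree < N) :
    SSq p = ∑ j ∈ Finset.range N, Complex.normSq (p.coeff j) := by
  apply Finset.sum_subset (Finset.range_subset_range.2 h)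
  intro j _ hj
  rw [Polynomial.coeff_eq_zero_of_natDegree_lt (by simpa using Finset.mem_range.not.1 hj)]
  simp

lemma SSq_nonneg (p : ℂ[X]) : 0 ≤ SSq p :=
  Finset.sum_nonneg fun _ _ => Complex.normSq_nonneg _

lemma swap_one (z : ℂ) (q : ℂ[X]) :
    SSq ((X - C z) * q) = SSq ((C ((starRingEnd ℂ) z) * X - 1) * q) := by
  set c := (starRingEnd ℂ) z with hc
  set m := q.natDegree with hm
  have hd1 : ((X - C z) * q).natDegree < m + 2 := by
    have := Polynomial.natDegree_mul_le (p := X - C z) (q := q)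
    simp [Polynomial.natDegree_X_sub_C] at this
    omega
  have hd2 : ((C c * X - 1) * q).natDegree < m + 2 := by
    have h1 : (C c * X - 1).natDegree ≤ 1 := by
      have : (C c * X - 1) = C c * X + C (-1) := by simp [sub_eq_add_neg]
      rw [this]; exact Polynomial.natDegree_linear_le
    have := Polynomial.natDegree_mul_le (p := C c * X - 1) (q := q)
    omega
  rw [SSq_eq _ hd1, SSq_eq _ hd2]
  have hA : ∀ j, ((X - C z) * q).coeff j = (X * q).coeff j - z * q.coeff j := by
    intro j; rw [sub_mul, Polynomial.coeff_sub, Polynomial.coeff_C_mul]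
  have hB : ∀ j, ((C c * X - 1) * q).coeff j = c * (X * q).coeff j - q.coeff j := by
    intro j
    have : (C c * X - 1) * q = C c * (X * q) - q := by ring
    rw [this, Polynomial.coeff_sub, Polynomial.coeff_C_mul]
  have key : ∀ j, Complex.normSq ((X * q).coeff j - z * q.coeff j)
      = Complex.normSq (c * (X * q).coeff j - q.coeff j)
        + (1 - Complex.normSq z) * (Complex.normSq ((X * q).coeff j) - Complex.normSq (q.coeff j)) := by
    intro j
    set u := (X * q).coeff j
    set v := q.coeff j
    have hre : u * (starRingEnd ℂ) (z * v) = (c * u) * (starRingEnd ℂ) v := by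
      rw [map_mul]; rw [hc]; ring
    rw [Complex.normSq_sub, Complex.normSq_sub, hre, map_mul, map_mul, hc,
      Complex.normSq_conj]
    ring
  have hshift : ∑ j ∈ Finset.range (m + 2), Complex.normSq ((X * q).coeff j)
      = ∑ j ∈ Finset.range (m + 2), Complex.normSq (q.coeff j) := by
    rw [Finset.sum_range_succ' _ (m + 1), Finset.sum_range_succ _ (m + 1)]
    simp [Polynomial.coeff_X_mul, Polynomial.coeff_eq_zero_of_natDegree_lt (by omega : q.natDegree < m + 1)]
  calc ∑ j ∈ Finset.range (m + 2), Complex.normSq (((X - C z) * q).coeff j)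
      = ∑ j ∈ Finset.range (m + 2), (Complex.normSq (((C c * X - 1) * q).coeff j)
          + (1 - Complex.normSq z) * (Complex.normSq ((X * q).coeff j) - Complex.normSq (q.coeff j))) := by
        refine Finset.sum_congr rfl fun j _ => ?_
        rw [hA, hB, key]
    _ = ∑ j ∈ Finset.range (m + 2), Complex.normSq (((C c * X - 1) * q).coeff j) := by
        rw [Finset.sum_add_distrib, ← Finset.mul_sum, Finset.sum_sub_distrib, hshift]
        ring

lemma swap_many (t : Multiset ℂ) : ∀ q : ℂ[X],
    SSq ((t.map fun z => X - C z).prod * q)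
      = SSq ((t.map fun z => C ((starRingEnd ℂ) z) * X - 1).prod * q) := by
  induction t using Multiset.induction with
  | empty => simp
  | cons z t ih =>
    intro q
    rw [Multiset.map_cons, Multiset.prod_cons, Multiset.map_cons, Multiset.prod_cons,
      mul_assoc, swap_one]
    calc SSq ((C ((starRingEnd ℂ) z) * X - 1) * ((t.map fun w => X - C w).prod * q))
        = SSq ((t.map fun w => X - C w).prod * ((C ((starRingEnd ℂ) z) * X - 1) * q)) :=
          congrArg SSq (by ring)
      _ = SSq ((t.map fun w => C ((starRingEnd ℂ) w) * X - 1).prod * ((C ((starRingEnd ℂ) z) * X - 1) * q)) := ih _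
      _ = SSq ((C ((starRingEnd ℂ) z) * X - 1) * (t.map fun w => C ((starRingEnd ℂ) w) * X - 1).prod * q) :=
          congrArg SSq (by ring)

lemma abs_leadingCoeff_le (p : ℂ[X]) : Complex.abs p.leadingCoeff ≤ Real.sqrt (SSq p) := by
  rw [Complex.abs_apply]
  apply Real.sqrt_le_sqrt
  exact Finset.single_le_sum (f := fun j => Complex.normSq (p.coeff j))
    (fun _ _ => Complex.normSq_nonneg _) (Finset.self_mem_range_succ _)

lemma landau (c : ℂ) (s : Multiset ℂ) :
    Complex.abs c * (s.map fun z => max 1 (Complex.abs z)).prod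
      ≤ Real.sqrt (SSq (C c * (s.map fun z => X - C z).prod)) := by
  classical
  set bad := s.filter (fun z => 1 < Complex.abs z) with hbad
  set good := s.filter (fun z => ¬ 1 < Complex.abs z) with hgood
  have hs : bad + good = s := Multiset.filter_add_not _ s
  -- LHS computation
  have hgood1 : (good.map fun z => max 1 (Complex.abs z)).prod = 1 := by
    apply Multiset.prod_eq_one
    intro x hx
    obtain ⟨z, hz, rfl⟩ := Multiset.mem_map.1 hx
    have : Complex.abs z ≤ 1 := le_of_not_gt (Multiset.mem_filter.1 hz).2
    simp [max_eq_left this]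
  have hbadmax : (bad.map fun z => max 1 (Complex.abs z)).prod = (bad.map Complex.abs).prod := by
    congr 1
    apply Multiset.map_congr rfl
    intro z hz
    exact max_eq_right (le_of_lt (Multiset.mem_filter.1 hz).2)
  have hLHS : (s.map fun z => max 1 (Complex.abs z)).prod = (bad.map Complex.abs).prod := by
    rw [← hs, Multiset.map_add, Multiset.prod_add, hgood1, hbadmax, mul_one]
  -- RHS: rewrite SSq via swap_many
  set ptil := (bad.map fun z => C ((starRingEnd ℂ) z) * X - 1).prod
      * (C c * (good.map fun z => X - C z).prod) with hptil
  have hSS : SSq (C c * (s.map fun z => X - C z).prod) = SSq ptil := by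
    have : C c * (s.map fun z => X - C z).prod
        = (bad.map fun z => X - C z).prod * (C c * (good.map fun z => X - C z).prod) := by
      rw [← hs, Multiset.map_add, Multiset.prod_add]; ring
    rw [this, swap_many]
  -- leading coefficient of ptil
  have hlead : Complex.abs ptil.leadingCoeff = Complex.abs c * (bad.map Complex.abs).prod := by
    have h1 : (good.map fun z => X - C z).map Polynomial.leadingCoeff = good.map fun _ => (1:ℂ) := by
      rw [Multiset.map_map]
      apply Multiset.map_congr rfl
      intro z _; exact Polynomial.leadingCoeff_X_sub_C z
    have h2 : (bad.map fun z => C ((starRingEnd ℂ) z) * X - 1).map Polynomial.leadingCoeff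
        = bad.map fun z => (starRingEnd ℂ) z := by
      rw [Multiset.map_map]
      apply Multiset.map_congr rfl
      intro z hz
      have hz0 : (starRingEnd ℂ) z ≠ 0 := by
        have h1z : 1 < Complex.abs z := (Multiset.mem_filter.1 hz).2
        intro h
        rw [← Complex.abs_conj z, h] at h1z
        norm_num at h1z
      show ((fun w => C ((starRingEnd ℂ) w) * X - 1) z).leadingCoeff = (starRingEnd ℂ) z
      have : C ((starRingEnd ℂ) z) * X - 1 = C ((starRingEnd ℂ) z) * X + C (-1) := by
        simp [sub_eq_add_neg]
      simp only [this]
      exact Polynomial.leadingCoeff_linear hz0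
    have hl : ptil.leadingCoeff = c * (bad.map fun z => (starRingEnd ℂ) z).prod := by
      rw [hptil, Polynomial.leadingCoeff_mul, Polynomial.leadingCoeff_mul,
        Polynomial.leadingCoeff_multiset_prod, Polynomial.leadingCoeff_multiset_prod,
        Polynomial.leadingCoeff_C, h1, h2, Multiset.prod_map_one, mul_one]
      ring
    rw [hl, map_mul, map_multiset_prod, Multiset.map_map]
    have hmm : (Multiset.map (⇑Complex.abs ∘ fun z => (starRingEnd ℂ) z) bad)
        = Multiset.map Complex.abs bad := Multiset.map_congr rfl fun z _ => Complex.abs_conj z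
    rw [hmm]
  rw [hLHS, hSS, ← hlead]
  exact abs_leadingCoeff_le ptil

lemma abs_msum_le (t : Multiset ℂ) : Complex.abs t.sum ≤ (t.map Complex.abs).sum := by
  induction t using Multiset.induction with
  | empty => simp
  | cons a t ih =>
    rw [Multiset.sum_cons, Multiset.map_cons, Multiset.sum_cons]
    exact le_trans (Complex.abs.add_le _ _) (by linarith)

lemma prodmap_mono (t : Multiset ℂ) (f g : ℂ → ℝ) (hf : ∀ z, 0 ≤ f z) (hfg : ∀ z, f z ≤ g z) :
    (t.map f).prod ≤ (t.map g).prod := by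
  induction t using Multiset.induction with
  | empty => simp
  | cons a t ih =>
    rw [Multiset.map_cons, Multiset.prod_cons, Multiset.map_cons, Multiset.prod_cons]
    apply mul_le_mul (hfg a) ih
    · exact Multiset.prod_nonneg (by intro x hx; obtain ⟨z, _, rfl⟩ := Multiset.mem_map.1 hx; exact hf z)
    · exact le_trans (hf a) (hfg a)

lemma prod_abs_le_prod_max (t s : Multiset ℂ) (h : t ≤ s) :
    (t.map Complex.abs).prod ≤ (s.map fun z => max 1 (Complex.abs z)).prod := by
  have step1 : (t.map Complex.abs).prod ≤ (t.map fun z => max 1 (Complex.abs z)).prod :=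
    prodmap_mono t _ _ (fun z => Complex.abs.nonneg z) (fun z => le_max_right _ _)
  refine le_trans step1 ?_
  obtain ⟨u, rfl⟩ := Multiset.le_iff_exists_add.1 h
  rw [Multiset.map_add, Multiset.prod_add]
  apply le_mul_of_one_le_right
  · exact Multiset.prod_nonneg (by
      intro x hx; obtain ⟨z, _, rfl⟩ := Multiset.mem_map.1 hx
      exact le_trans zero_le_one (le_max_left _ _))
  · exact Multiset.one_le_prod (by
      intro x hx; obtain ⟨z, _, rfl⟩ := Multiset.mem_map.1 hx
      exact le_max_left _ _)

lemma esymm_bound (s : Multiset ℂ) (k : ℕ) :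
    Complex.abs (s.esymm k)
      ≤ ((Multiset.card s).choose k : ℝ) * (s.map fun z => max 1 (Complex.abs z)).prod := by
  have hdef : s.esymm k = ((s.powersetCard k).map Multiset.prod).sum := rfl
  rw [hdef]
  refine le_trans (abs_msum_le _) ?_
  rw [Multiset.map_map]
  have hb : ∀ x ∈ (s.powersetCard k).map (Complex.abs ∘ Multiset.prod),
      x ≤ (s.map fun z => max 1 (Complex.abs z)).prod := by
    intro x hx
    obtain ⟨t, ht, rfl⟩ := Multiset.mem_map.1 hx
    have hts : t ≤ s := (Multiset.mem_powersetCard.1 ht).1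
    show Complex.abs t.prod ≤ _
    rw [map_multiset_prod]
    exact prod_abs_le_prod_max t s hts
  refine le_trans (Multiset.sum_le_card_nsmul _ _ hb) ?_
  rw [Multiset.card_map, Multiset.card_powersetCard, nsmul_eq_mul]

/-- Mignotte's bound: if `g ∈ ℤ[x]` divides a nonzero `f ∈ ℤ[x]` of degree `n`, then
every coefficient of `g` has absolute value at most `2^n` times the Euclidean norm of
the coefficient vector of `f`. -/
theorem stmt_12 (f g : Polynomial ℤ) (hf : f ≠ 0) (hdvd : g ∣ f) (i : ℕ) :
    (|g.coeff i| : ℝ) ≤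
      2 ^ f.natDegree *
        Real.sqrt (∑ j ∈ Finset.range (f.natDegree + 1), ((f.coeff j : ℝ)) ^ 2) := by
  classical
  obtain ⟨h, hfgh⟩ := hdvd
  have hg0 : g ≠ 0 := by rintro rfl; rw [zero_mul] at hfgh; exact hf hfgh
  have hh0 : h ≠ 0 := by rintro rfl; rw [mul_zero] at hfgh; exact hf hfgh
  set φ : ℤ →+* ℂ := Int.castRingHom ℂ with hφ
  have hinj : Function.Injective φ := fun a b hab => by simpa using hab
  set F := f.map φ with hF
  set G := g.map φ with hG
  set H := h.map φ with hH
  have hF0 : F ≠ 0 := (Polynomial.map_ne_zero_iff hinj).2 hf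
  have hG0 : G ≠ 0 := (Polynomial.map_ne_zero_iff hinj).2 hg0
  have hH0 : H ≠ 0 := (Polynomial.map_ne_zero_iff hinj).2 hh0
  have hFGH : F = G * H := by rw [hF, hfgh, Polynomial.map_mul]
  have hdegF : F.natDegree = f.natDegree :=
    Polynomial.natDegree_map_eq_iff.2 (Or.inl (fun h0 =>
      Polynomial.leadingCoeff_ne_zero.2 hf (hinj (h0.trans (_root_.map_zero φ).symm))))
  have hdegG : G.natDegree = g.natDegree :=
    Polynomial.natDegree_map_eq_iff.2 (Or.inl (fun h0 =>
      Polynomial.leadingCoeff_ne_zero.2 hg0 (hinj (h0.trans (_root_.map_zero φ).symm))))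
  set n := f.natDegree with hn
  set m := g.natDegree with hm
  have hmn : m ≤ n := Polynomial.natDegree_le_of_dvd ⟨h, hfgh⟩ hf
  -- the sqrt on the RHS equals sqrt (SSq F)
  have hsq : Real.sqrt (SSq F) = Real.sqrt (∑ j ∈ Finset.range (n + 1), ((f.coeff j : ℝ)) ^ 2) := by
    congr 1
    rw [SSq, hdegF]
    refine Finset.sum_congr rfl fun j _ => ?_
    rw [hF, Polynomial.coeff_map]
    show Complex.normSq ((f.coeff j : ℤ) : ℂ) = _
    rw [Complex.normSq_intCast]
    ring
  have hRHSnn : (0:ℝ) ≤ Real.sqrt (∑ j ∈ Finset.range (n + 1), ((f.coeff j : ℝ)) ^ 2) :=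
    Real.sqrt_nonneg _
  by_cases hi : i ≤ m
  · -- Mahler measures
    set PG : ℝ := (G.roots.map fun z => max 1 (Complex.abs z)).prod with hPG
    set PH : ℝ := (H.roots.map fun z => max 1 (Complex.abs z)).prod with hPH
    have hPGnn : 0 ≤ PG := Multiset.prod_nonneg (by
      intro x hx; obtain ⟨z, _, rfl⟩ := Multiset.mem_map.1 hx
      exact le_trans zero_le_one (le_max_left _ _))
    have hPH1 : 1 ≤ PH := Multiset.one_le_prod (by
      intro x hx; obtain ⟨z, _, rfl⟩ := Multiset.mem_map.1 hx
      exact le_max_left _ _)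
    set MG : ℝ := Complex.abs G.leadingCoeff * PG with hMG
    set MF : ℝ := Complex.abs F.leadingCoeff
      * (F.roots.map fun z => max 1 (Complex.abs z)).prod with hMF
    have hMGnn : 0 ≤ MG := mul_nonneg (Complex.abs.nonneg _) hPGnn
    have hHlead : (1:ℝ) ≤ Complex.abs H.leadingCoeff := by
      rw [Polynomial.leadingCoeff_map_of_injective hinj]
      show (1:ℝ) ≤ Complex.abs ((h.leadingCoeff : ℤ) : ℂ)
      rw [Complex.abs_intCast]
      exact_mod_cast Int.one_le_abs (Polynomial.leadingCoeff_ne_zero.2 hh0)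
    have hMGMF : MG ≤ MF := by
      have hroots : F.roots = G.roots + H.roots := by
        rw [hFGH]; exact Polynomial.roots_mul (hFGH ▸ hF0)
      have : MF = MG * (Complex.abs H.leadingCoeff * PH) := by
        rw [hMF, hroots, hFGH, Polynomial.leadingCoeff_mul, map_mul,
          Multiset.map_add, Multiset.prod_add, hMG, hPG, hPH]
        ring
      rw [this]
      exact le_mul_of_one_le_right hMGnn
        (one_le_mul_of_one_le_of_one_le hHlead hPH1)
    have hMFsqrt : MF ≤ Real.sqrt (SSq F) := by
      have hsplits : Multiset.card F.roots = F.natDegree :=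
        (Polynomial.splits_iff_card_roots).1 (IsAlgClosed.splits F)
      have hfact := Polynomial.C_leadingCoeff_mul_prod_multiset_X_sub_C hsplits
      have := landau F.leadingCoeff F.roots
      rwa [hfact] at this
    -- coefficient bound via Vieta
    have hcardG : Multiset.card G.roots = m := by
      rw [(Polynomial.splits_iff_card_roots).1 (IsAlgClosed.splits G), hdegG]
    have hGfact := Polynomial.C_leadingCoeff_mul_prod_multiset_X_sub_C
      ((Polynomial.splits_iff_card_roots).1 (IsAlgClosed.splits G))
    have hco : G.coeff i = G.leadingCoeff
        * ((-1) ^ (Multiset.card G.roots - i) * G.roots.esymm (Multiset.card G.roots - i)) := by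
      conv_lhs => rw [← hGfact]
      rw [Polynomial.coeff_C_mul,
        Multiset.prod_X_sub_C_coeff G.roots (by rw [hcardG]; exact hi)]
    have habs : Complex.abs (G.coeff i) ≤ (m.choose (m - i) : ℝ) * MG := by
      rw [hco, map_mul, map_mul, map_pow]
      simp only [map_neg_eq_map, map_one, one_pow, one_mul]
      calc Complex.abs G.leadingCoeff * Complex.abs (G.roots.esymm (Multiset.card G.roots - i))
          ≤ Complex.abs G.leadingCoeff
            * (((Multiset.card G.roots).choose (Multiset.card G.roots - i) : ℝ) * PG) :=
            mul_le_mul_of_nonneg_left (esymm_bound _ _) (Complex.abs.nonneg _)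
        _ = (m.choose (m - i) : ℝ) * MG := by rw [hcardG, hMG]; ring
    have hchoose : (m.choose (m - i) : ℝ) ≤ 2 ^ n := by
      have h1 : m.choose (m - i) ≤ 2 ^ m := by
        calc m.choose (m - i) ≤ ∑ j ∈ Finset.range (m + 1), m.choose j :=
              Finset.single_le_sum (f := fun j => m.choose j) (fun _ _ => Nat.zero_le _)
                (Finset.mem_range.2 (by omega))
          _ = 2 ^ m := Nat.sum_range_choose m
      have h2 : (2:ℕ) ^ m ≤ 2 ^ n := Nat.pow_le_pow_right (by norm_num) hmn
      exact_mod_cast le_trans h1 h2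
    have hLHS : (|g.coeff i| : ℝ) = Complex.abs (G.coeff i) := by
      rw [hG, Polynomial.coeff_map]
      show _ = Complex.abs ((g.coeff i : ℤ) : ℂ)
      rw [Complex.abs_intCast]
    rw [← hsq, hLHS]
    calc Complex.abs (G.coeff i) ≤ (m.choose (m - i) : ℝ) * MG := habs
      _ ≤ 2 ^ n * Real.sqrt (SSq F) :=
          mul_le_mul hchoose (le_trans hMGMF hMFsqrt) hMGnn (by positivity)
  · have : g.coeff i = 0 := Polynomial.coeff_eq_zero_of_natDegree_lt (by omega)
    rw [this]
    simp only [abs_zero, Int.cast_zero]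
    positivity
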